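/- arXiv:1309.7580 — 2 statements merged into one kernel-verified Lean document; each statement's English description precedes it below -/
import Mathlib

section
/- There exists an absolute constant κ > 0 with the following property. Define f(x,y) = xy(x + y) and let A, B be nonempty finite sets of nonzero real numbers. Then |f(A,B)| ≥ κ · |A|^{2/3} · |B|^{2/3}. -/
open Polynomial in

lemma conic_card_le (e b b' c c' : ℝ) (he : e = 1 ∨ e = -1)
    (hb : b ≠ 0) (hb' : b' ≠ 0) (hc : c ≠ 0) (hc' : c' ≠ 0)
    (hbb' : b ≠ b') (hne : (b, b') ≠ (c, c')) (T : Finset (ℝ × ℝ))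
    (hT : ∀ x ∈ T, x.1 ^ 2 * b + e * x.1 * b ^ 2 = x.2 ^ 2 * c + e * x.2 * c ^ 2 ∧
                   x.1 ^ 2 * b' + e * x.1 * b' ^ 2 = x.2 ^ 2 * c' + e * x.2 * c' ^ 2) :
    T.card ≤ 4 := by
  have he2 : e ^ 2 = 1 := by rcases he with rfl | rfl <;> norm_num
  have hee : e ≠ 0 := by rcases he with rfl | rfl <;> norm_num
  set γ : ℝ := b * b' * (b - b') with hγdef
  set α : ℝ := b' * c - b * c' with hαdef
  set β : ℝ := b' * c ^ 2 - b * c' ^ 2 with hβdef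
  have hγ : γ ≠ 0 := by
    simp only [hγdef]
    exact mul_ne_zero (mul_ne_zero hb hb') (sub_ne_zero.mpr hbb')
  set k4 : ℝ := -(b * α ^ 2) with hk4
  set k3 : ℝ := -(2 * b * e * α * β) with hk3
  set k2 : ℝ := γ ^ 2 * c - b * β ^ 2 - b ^ 2 * γ * α with hk2
  set k1 : ℝ := e * (γ ^ 2 * c ^ 2 - b ^ 2 * γ * β) with hk1
  set F : ℝ[X] := C k4 * X ^ 4 + C k3 * X ^ 3 + C k2 * X ^ 2 + C k1 * X with hFdef
  have hcoeff4 : F.coeff 4 = k4 := by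
    simp only [hFdef, coeff_add, coeff_C_mul, coeff_X_pow, coeff_X]
    norm_num
  have hcoeff2 : F.coeff 2 = k2 := by
    simp only [hFdef, coeff_add, coeff_C_mul, coeff_X_pow, coeff_X]
    norm_num
  have hF0 : F ≠ 0 := by
    by_cases hα : α = 0
    · -- proportional case: c = t*b, c' = t*b'
      have hbc : b' * c = b * c' := by
        have h := hα; rw [hαdef] at h; linarith [sub_eq_zero.mp h]
      set t : ℝ := c / b with htdef
      have htc : c = t * b := by rw [htdef, div_mul_cancel₀ c hb]
      have ht : c' = t * b' := by
        rw [htdef, div_mul_eq_mul_div, eq_div_iff hb]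
        linarith [hbc]
      have ht0 : t ≠ 0 := fun h => hc (by rw [htc, h, zero_mul])
      have ht1 : t ≠ 1 := by
        intro h
        exact hne (by rw [htc, ht, h, one_mul, one_mul])
      have hβt : β = t ^ 2 * γ := by
        simp only [hβdef, hγdef]; rw [htc, ht]; ring
      intro hF
      have h2 : F.coeff 2 = 0 := by rw [hF]; simp
      rw [hcoeff2] at h2
      have hexp : k2 = γ ^ 2 * b * t * (1 - t) * (1 + t + t ^ 2) := by
        rw [hk2, hα, hβt, htc]; ring
      rw [hexp] at h2
      have h1t : (1 : ℝ) + t + t ^ 2 ≠ 0 := by nlinarith [sq_nonneg (t + 1/2), sq_nonneg t]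
      have : γ ^ 2 * b * t * (1 - t) * (1 + t + t ^ 2) ≠ 0 := by
        apply mul_ne_zero (mul_ne_zero (mul_ne_zero (mul_ne_zero (pow_ne_zero 2 hγ) hb) ht0)
          (sub_ne_zero.mpr (Ne.symm ht1))) h1t
      exact this h2
    · intro hF
      have h4 : F.coeff 4 = 0 := by rw [hF]; simp
      rw [hcoeff4, hk4, neg_eq_zero] at h4
      rcases mul_eq_zero.mp h4 with h | h
      · exact hb h
      · exact hα (pow_eq_zero_iff two_ne_zero |>.mp h)
  have hdeg : F.natDegree ≤ 4 := by
    rw [hFdef]; compute_degree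
  -- every solution's second coordinate is a root of F
  have hroot : ∀ x ∈ T, x.2 ∈ F.roots.toFinset := by
    intro x hx
    obtain ⟨h1, h2⟩ := hT x hx
    have hA : e * γ * x.1 = α * x.2 ^ 2 + e * β * x.2 := by
      simp only [hγdef, hαdef, hβdef]
      linear_combination b' * h1 - b * h2
    have heval : F.eval x.2 = 0 := by
      simp only [hFdef, eval_add, eval_mul, eval_pow, eval_C, eval_X, hk4, hk3, hk2, hk1]
      rcases he with rfl | rfl
      · linear_combination (-(γ^2)) * h1 + (b * (1 * γ * x.1 + (α * x.2 ^ 2 + 1 * β * x.2)) + b^2*γ) * hA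
      · linear_combination (-(γ^2)) * h1 + (b * ((-1) * γ * x.1 + (α * x.2 ^ 2 + (-1) * β * x.2)) + b^2*γ) * hA
    rw [Multiset.mem_toFinset, mem_roots hF0]
    exact heval
  -- injectivity of (a, z) ↦ z on T
  have hinj : Set.InjOn (fun x : ℝ × ℝ => x.2) T := by
    intro x hx y hy hxy
    simp only at hxy
    obtain ⟨h1x, h2x⟩ := hT x hx
    obtain ⟨h1y, h2y⟩ := hT y hy
    have hAx : e * γ * x.1 = α * x.2 ^ 2 + e * β * x.2 := by
      simp only [hγdef, hαdef, hβdef]; linear_combination b' * h1x - b * h2x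
    have hAy : e * γ * y.1 = α * y.2 ^ 2 + e * β * y.2 := by
      simp only [hγdef, hαdef, hβdef]; linear_combination b' * h1y - b * h2y
    have : e * γ * x.1 = e * γ * y.1 := by rw [hAx, hAy, hxy]
    have h1 : x.1 = y.1 := by
      have := mul_left_cancel₀ (mul_ne_zero hee hγ) this
      exact this
    exact Prod.ext h1 hxy
  calc T.card ≤ F.roots.toFinset.card := Finset.card_le_card_of_injOn _ hroot hinj
    _ ≤ Multiset.card F.roots := Multiset.toFinset_card_le _
    _ ≤ F.natDegree := F.card_roots'
    _ ≤ 4 := hdeg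


open Finset

section Abstract

variable (w : ℝ → ℝ → ℝ) (R S : Finset ℝ)

/-- consecutive pairs of S -/
noncomputable def consPairs : Finset (ℝ × ℝ) :=
  (S ×ˢ S).filter fun p => p.1 < p.2 ∧ ∀ x ∈ S, ¬(p.1 < x ∧ x < p.2)

lemma consPairs_mem {S : Finset ℝ} {p : ℝ × ℝ} (hp : p ∈ consPairs S) :
    p.1 ∈ S ∧ p.2 ∈ S ∧ p.1 < p.2 ∧ ∀ x ∈ S, ¬(p.1 < x ∧ x < p.2) := by
  simp only [consPairs, mem_filter, mem_product] at hp
  tauto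

lemma consPairs_right_unique {S : Finset ℝ} {p q : ℝ × ℝ}
    (hp : p ∈ consPairs S) (hq : q ∈ consPairs S) (h : p.1 = q.1) : p = q := by
  obtain ⟨hp1, hp2, hplt, hpgap⟩ := consPairs_mem hp
  obtain ⟨hq1, hq2, hqlt, hqgap⟩ := consPairs_mem hq
  have h2 : p.2 = q.2 := by
    by_contra hne
    rcases lt_or_gt_of_ne hne with hlt | hlt
    · exact hqgap p.2 hp2 ⟨h ▸ hplt, hlt⟩
    · exact hpgap q.2 hq2 ⟨h ▸ hqlt, hlt⟩
  exact Prod.ext h h2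

lemma consPairs_card_le (S : Finset ℝ) : (consPairs S).card ≤ S.card := by
  apply Finset.card_le_card_of_injOn (fun p => p.1)
  · intro p hp; exact (consPairs_mem hp).1
  · intro p hp q hq h
    exact consPairs_right_unique hp hq h

lemma consPairs_card_ge (S : Finset ℝ) (hS : S.Nonempty) :
    S.card - 1 ≤ (consPairs S).card := by
  classical
  have hmax := S.max'_mem hS
  have key : (S.erase (S.max' hS)).card ≤ (consPairs S).card := by
    apply Finset.card_le_card_of_injOn
      (fun s => (s, if h : (S.filter (fun x => s < x)).Nonempty
        then (S.filter (fun x => s < x)).min' h else 0))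
    · intro s hs
      have hlt : s < S.max' hS := Finset.lt_max'_of_mem_erase_max' S hS hs
      have hsS : s ∈ S := Finset.mem_of_mem_erase hs
      have hne : (S.filter (fun x => s < x)).Nonempty :=
        ⟨S.max' hS, Finset.mem_filter.mpr ⟨hmax, hlt⟩⟩
      simp only [dif_pos hne]
      have hmem := (S.filter (fun x => s < x)).min'_mem hne
      rw [Finset.mem_filter] at hmem
      simp only [Finset.mem_coe, consPairs, mem_filter, mem_product]
      refine ⟨⟨hsS, hmem.1⟩, hmem.2, ?_⟩
      intro x hx ⟨hx1, hx2⟩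
      have : (S.filter (fun y => s < y)).min' hne ≤ x :=
        Finset.min'_le _ x (Finset.mem_filter.mpr ⟨hx, hx1⟩)
      exact absurd hx2 (not_lt.mpr this)
    · intro a _ b _ h
      exact (Prod.mk.injEq _ _ _ _).mp h |>.1
  rw [Finset.card_erase_of_mem hmax] at key
  exact key

/-- ordering of distinct consecutive pairs -/
lemma consPairs_order {S : Finset ℝ} {p q : ℝ × ℝ}
    (hp : p ∈ consPairs S) (hq : q ∈ consPairs S) (h : p ≠ q) :
    p.2 ≤ q.1 ∨ q.2 ≤ p.1 := by
  obtain ⟨hp1, hp2, hplt, hpgap⟩ := consPairs_mem hp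
  obtain ⟨hq1, hq2, hqlt, hqgap⟩ := consPairs_mem hq
  rcases lt_trichotomy p.1 q.1 with h1 | h1 | h1
  · left
    by_contra hc
    push_neg at hc
    exact hpgap q.1 hq1 ⟨h1, hc⟩
  · exact absurd (consPairs_right_unique hp hq h1) h
  · right
    by_contra hc
    push_neg at hc
    exact hqgap p.1 hp1 ⟨h1, hc⟩

end Abstract

open Finset in
lemma abstract_count (w : ℝ → ℝ → ℝ) (R S : Finset ℝ) (L' : ℕ)
    (hR : R.Nonempty) (hS : S.card = L' + 1) (hL' : 1 ≤ L')
    (H1 : ∀ r ∈ R, ∀ s ∈ S, ∀ t ∈ S, s < t → w r s < w r t)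
    (H2 : ∀ s ∈ S, ∀ t ∈ S, s < t → ∀ r ∈ R, ∀ r' ∈ R,
        w r s = w r' s → w r t = w r' t → r = r')
    (H3 : ∀ s ∈ S, ∀ t ∈ S, ∀ s' ∈ S, ∀ t' ∈ S, s < t → s' < t' → (s,t) ≠ (s',t') →
      ((R ×ˢ R).filter fun rr => w rr.1 s = w rr.2 s' ∧ w rr.1 t = w rr.2 t').card ≤ 4) :
    R.card ^ 2 * L' ^ 3 ≤
      12 * (Finset.image₂ w R S).card ^ 2 * (R.card * (L'+1) + 4 * (L'+1)^2) := by
  classical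
  set C : Finset ℝ := Finset.image₂ w R S with hC
  set K : ℕ := C.card with hK
  set N : ℕ := R.card with hN
  have hSne : S.Nonempty := Finset.card_pos.mp (by omega)
  have hL'pos : 0 < L' := hL'
  have hWmem : ∀ r ∈ R, ∀ s ∈ S, w r s ∈ C := fun r hr s hs =>
    Finset.mem_image₂_of_mem hr hs
  have H1' : ∀ r ∈ R, ∀ s ∈ S, ∀ t ∈ S, s ≤ t → w r s ≤ w r t := by
    intro r hr s hs t ht hst
    rcases eq_or_lt_of_le hst with rfl | h
    · exact le_refl _
    · exact le_of_lt (H1 r hr s hs t ht h)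
  -- K is at least L'+1
  have hKL : L' + 1 ≤ K := by
    obtain ⟨r₀, hr₀⟩ := hR
    rw [← hS]
    apply Finset.card_le_card_of_injOn (fun s => w r₀ s)
    · intro s hs; exact hWmem r₀ hr₀ s hs
    · intro s hs t ht h
      try simp only [Finset.mem_coe] at hs ht
      by_contra hne
      rcases lt_or_gt_of_ne hne with hlt | hlt
      · exact absurd h (ne_of_lt (H1 r₀ hr₀ s hs t ht hlt))
      · exact absurd h.symm (ne_of_lt (H1 r₀ hr₀ t ht s hs hlt))
  set g : ℕ := 2 * K / L' + 1 with hg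
  have hg0 : 0 < g := Nat.succ_pos _
  have hgL : 2 * K < g * L' := by
    have hdm := Nat.div_add_mod (2 * K) L'
    have hmod : (2 * K) % L' < L' := Nat.mod_lt _ hL'pos
    calc 2 * K = L' * (2 * K / L') + (2 * K) % L' := hdm.symm
      _ < L' * (2 * K / L') + L' := by omega
      _ = g * L' := by rw [hg]; ring
  have hgL' : g * L' ≤ 2 * K + L' := by
    have : 2 * K / L' * L' ≤ 2 * K := Nat.div_mul_le_self _ _
    calc g * L' = 2 * K / L' * L' + L' := by rw [hg]; ring
      _ ≤ 2 * K + L' := by omega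
  -- strangers count
  set str : ℝ → ℝ × ℝ → ℕ := fun r p => (C.filter fun cc => w r p.1 < cc ∧ cc < w r p.2).card
    with hstr
  -- sum of strangers over consecutive pairs is at most K
  have hsum : ∀ r ∈ R, ∑ p ∈ consPairs S, str r p ≤ K := by
    intro r hr
    have hdisj : ∀ p ∈ consPairs S, ∀ q ∈ consPairs S, p ≠ q →
        Disjoint (C.filter fun cc => w r p.1 < cc ∧ cc < w r p.2)
                 (C.filter fun cc => w r q.1 < cc ∧ cc < w r q.2) := by
      intro p hp q hq hpq
      obtain ⟨hp1, hp2, hplt, _⟩ := consPairs_mem hp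
      obtain ⟨hq1, hq2, hqlt, _⟩ := consPairs_mem hq
      rw [Finset.disjoint_left]
      intro x hx1 hx2
      rw [Finset.mem_filter] at hx1 hx2
      rcases consPairs_order hp hq hpq with h | h
      · have : w r p.2 ≤ w r q.1 := H1' r hr _ hp2 _ hq1 h
        linarith [hx1.2.2, hx2.2.1]
      · have : w r q.2 ≤ w r p.1 := H1' r hr _ hq2 _ hp1 h
        linarith [hx1.2.1, hx2.2.2]
    calc ∑ p ∈ consPairs S, str r p
        = ((consPairs S).biUnion fun p => C.filter fun cc => w r p.1 < cc ∧ cc < w r p.2).card :=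
          (Finset.card_biUnion hdisj).symm
      _ ≤ K := Finset.card_le_card (by
          intro x hx
          rw [Finset.mem_biUnion] at hx
          obtain ⟨p, _, hp⟩ := hx
          exact (Finset.mem_filter.mp hp).1)
  -- good pairs per row
  have hgood : ∀ r ∈ R, L' ≤ 2 * ((consPairs S).filter fun p => str r p < g).card := by
    intro r hr
    have hbadg : ((consPairs S).filter fun p => ¬ str r p < g).card * g ≤ K := by
      calc ((consPairs S).filter fun p => ¬ str r p < g).card * g
          = ∑ _p ∈ (consPairs S).filter fun p => ¬ str r p < g, g := by
            rw [Finset.sum_const, smul_eq_mul]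
        _ ≤ ∑ p ∈ (consPairs S).filter (fun p => ¬ str r p < g), str r p :=
            Finset.sum_le_sum (by
              intro p hp
              rw [Finset.mem_filter] at hp
              omega)
        _ ≤ ∑ p ∈ consPairs S, str r p := Finset.sum_le_sum_of_subset (Finset.filter_subset _ _)
        _ ≤ K := hsum r hr
    have hsplit := Finset.card_filter_add_card_filter_not
      (s := consPairs S) (p := fun p => str r p < g)
    have hcge : L' ≤ (consPairs S).card := by
      have := consPairs_card_ge S hSne
      rw [hS] at this
      omega
    set bc := ((consPairs S).filter fun p => ¬ str r p < g).card with hbc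
    set gc := ((consPairs S).filter fun p => str r p < g).card with hgc
    have h2bad : 2 * bc < L' := by
      by_contra hcon
      push_neg at hcon
      have h1 : g * L' ≤ g * (2 * bc) := Nat.mul_le_mul_left g hcon
      have h2 : g * (2 * bc) = 2 * (bc * g) := by ring
      linarith
    omega
  -- the set of good (row, pair)
  set Good : Finset (ℝ × (ℝ × ℝ)) :=
    (R ×ˢ consPairs S).filter (fun rp => str rp.1 rp.2 < g) with hGood
  have hGoodcard : N * L' ≤ 2 * Good.card := by
    have hfib : Good.card = ∑ r ∈ R, ((consPairs S).filter fun p => str r p < g).card := by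
      rw [Finset.card_eq_sum_card_fiberwise (f := fun rp => rp.1) (t := R)
        (fun rp hrp => by
          rw [hGood, Finset.mem_coe, Finset.mem_filter, Finset.mem_product] at hrp
          exact hrp.1.1)]
      apply Finset.sum_congr rfl
      intro r hr
      have hprod : Good.filter (fun rp => rp.1 = r) =
          {r} ×ˢ ((consPairs S).filter fun p => str r p < g) := by
        ext rp
        rw [Finset.mem_filter, hGood, Finset.mem_filter, Finset.mem_product,
          Finset.mem_product, Finset.mem_singleton, Finset.mem_filter]
        constructor
        · rintro ⟨⟨⟨_, h2⟩, h3⟩, h4⟩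
          exact ⟨h4, h2, h4 ▸ h3⟩
        · rintro ⟨h1, h2, h3⟩
          exact ⟨⟨⟨h1 ▸ hr, h2⟩, h1 ▸ h3⟩, h1⟩
      rw [hprod, Finset.card_product, Finset.card_singleton, one_mul]
    calc N * L' = ∑ _r ∈ R, L' := by rw [Finset.sum_const, smul_eq_mul, hN]
      _ ≤ ∑ r ∈ R, 2 * ((consPairs S).filter fun p => str r p < g).card :=
          Finset.sum_le_sum (fun r hr => hgood r hr)
      _ = 2 * Good.card := by rw [hfib, Finset.mul_sum]
  -- the set of close value pairs
  set P : Finset (ℝ × ℝ) := (C ×ˢ C).filter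
    (fun uv => uv.1 < uv.2 ∧ (C.filter fun cc => uv.1 < cc ∧ cc < uv.2).card < g) with hP
  have hPcard : P.card ≤ K * g := by
    have : P.card ≤ (C ×ˢ Finset.range g).card := by
      apply Finset.card_le_card_of_injOn
        (fun uv => (uv.1, (C.filter fun cc => uv.1 < cc ∧ cc < uv.2).card))
      · intro uv huv
        rw [hP, Finset.mem_coe, Finset.mem_filter, Finset.mem_product] at huv
        rw [Finset.mem_coe, Finset.mem_product, Finset.mem_range]
        exact ⟨huv.1.1, huv.2.2⟩
      · intro uv huv uv' huv' heq
        try simp only [Finset.mem_coe] at huv huv'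
        rw [hP, Finset.mem_filter, Finset.mem_product] at huv huv'
        simp only [Prod.mk.injEq] at heq
        obtain ⟨h1, h2⟩ := heq
        have huveq : uv.2 = uv'.2 := by
          by_contra hne
          have key : ∀ a b : ℝ × ℝ, a.2 ∈ C → a.1 < a.2 → a.1 = b.1 → a.2 < b.2 →
              (C.filter fun cc => a.1 < cc ∧ cc < a.2).card <
              (C.filter fun cc => b.1 < cc ∧ cc < b.2).card := by
            intro a b ha2 halt hab hlt
            apply Finset.card_lt_card
            have hsub : (C.filter fun cc => a.1 < cc ∧ cc < a.2) ⊆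
                (C.filter fun cc => b.1 < cc ∧ cc < b.2) := by
              intro x hx
              rw [Finset.mem_filter] at hx ⊢
              refine ⟨hx.1, ?_, lt_trans hx.2.2 hlt⟩
              rw [← hab]; exact hx.2.1
            rw [Finset.ssubset_iff_of_subset hsub]
            refine ⟨a.2, ?_, ?_⟩
            · rw [Finset.mem_filter]
              refine ⟨ha2, ?_, hlt⟩
              rw [← hab]; exact halt
            · rw [Finset.mem_filter]
              push_neg
              intro _ _
              exact le_refl a.2
          rcases lt_or_gt_of_ne hne with hlt | hlt
          · have := key uv uv' huv.1.2 huv.2.1 h1 hlt; omega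
          · have := key uv' uv huv'.1.2 huv'.2.1 h1.symm hlt; omega
        exact Prod.ext h1 huveq
    calc P.card ≤ (C ×ˢ Finset.range g).card := this
      _ = K * g := by rw [Finset.card_product, Finset.card_range]
  -- the map Φ
  set Φ : ℝ × (ℝ × ℝ) → ℝ × ℝ := fun rp => (w rp.1 rp.2.1, w rp.1 rp.2.2) with hΦ
  have hΦmem : ∀ rp ∈ Good, Φ rp ∈ P := by
    intro rp hrp
    rw [hGood, Finset.mem_filter, Finset.mem_product] at hrp
    obtain ⟨⟨hr, hp⟩, hstr'⟩ := hrp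
    obtain ⟨hp1, hp2, hplt, _⟩ := consPairs_mem hp
    rw [hP, Finset.mem_filter, Finset.mem_product]
    exact ⟨⟨hWmem _ hr _ hp1, hWmem _ hr _ hp2⟩, H1 _ hr _ hp1 _ hp2 hplt, hstr'⟩
  set fib : ℝ × ℝ → ℕ := fun p => (Good.filter fun rp => Φ rp = p).card with hfibdef
  have hfibsum : Good.card = ∑ p ∈ P, fib p :=
    Finset.card_eq_sum_card_fiberwise hΦmem
  set Dset : Finset ((ℝ × (ℝ × ℝ)) × (ℝ × (ℝ × ℝ))) :=
    (Good ×ˢ Good).filter (fun q => Φ q.1 = Φ q.2) with hDset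
  have hDeq : Dset.card = ∑ p ∈ P, (fib p)^2 := by
    rw [Finset.card_eq_sum_card_fiberwise (f := fun q => Φ q.1) (t := P)
      (fun q hq => by
        rw [hDset, Finset.mem_coe, Finset.mem_filter, Finset.mem_product] at hq
        exact hΦmem _ hq.1.1)]
    apply Finset.sum_congr rfl
    intro p hp
    have : Dset.filter (fun q => Φ q.1 = p) =
        (Good.filter fun rp => Φ rp = p) ×ˢ (Good.filter fun rp => Φ rp = p) := by
      ext q
      simp only [Finset.mem_filter, hDset, Finset.mem_product]
      constructor
      · rintro ⟨⟨⟨h1, h2⟩, h3⟩, h4⟩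
        exact ⟨⟨h1, h4⟩, h2, by rw [← h3]; exact h4⟩
      · rintro ⟨⟨h1, h2⟩, h3, h4⟩
        exact ⟨⟨⟨h1, h3⟩, h2.trans h4.symm⟩, h2⟩
    rw [this, Finset.card_product, hfibdef, sq]
  -- Cauchy–Schwarz
  have hCS : Good.card ^ 2 ≤ P.card * Dset.card := by
    have := Finset.sum_mul_sq_le_sq_mul_sq P (fun _ => (1:ℝ)) (fun p => (fib p : ℝ))
    have h1 : (∑ p ∈ P, (1:ℝ) * (fib p : ℝ)) = (Good.card : ℝ) := by
      rw [hfibsum]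
      push_cast
      simp
    have h2 : (∑ _p ∈ P, (1:ℝ)^2) = (P.card : ℝ) := by simp
    rw [h1, h2] at this
    have h3 : (∑ p ∈ P, (fib p : ℝ)^2) = (Dset.card : ℝ) := by
      rw [hDeq]
      push_cast
      rfl
    rw [h3] at this
    exact_mod_cast this
  -- bound on Dset
  have hDbound : Dset.card ≤ (L'+1) * N + 4 * (L'+1)^2 := by
    rw [Finset.card_eq_sum_card_fiberwise (f := fun q => (q.1.2, q.2.2))
      (t := consPairs S ×ˢ consPairs S)
      (fun q hq => by
        rw [hDset, Finset.mem_coe, Finset.mem_filter, Finset.mem_product] at hq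
        obtain ⟨⟨hq1, hq2⟩, _⟩ := hq
        rw [hGood, Finset.mem_filter, Finset.mem_product] at hq1 hq2
        rw [Finset.mem_coe, Finset.mem_product]
        exact ⟨hq1.1.2, hq2.1.2⟩)]
    have hbound : ∀ pp ∈ consPairs S ×ˢ consPairs S,
        (Dset.filter (fun q => (q.1.2, q.2.2) = pp)).card ≤
          if pp.1 = pp.2 then N else 4 := by
      intro pp hpp
      rw [Finset.mem_product] at hpp
      obtain ⟨hpp1, hpp2⟩ := hpp
      obtain ⟨hs1, ht1, hlt1, _⟩ := consPairs_mem hpp1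
      obtain ⟨hs2, ht2, hlt2, _⟩ := consPairs_mem hpp2
      by_cases hd : pp.1 = pp.2
      · rw [if_pos hd]
        apply Finset.card_le_card_of_injOn (fun q => q.1.1)
        · intro q hq
          rw [Finset.mem_coe, Finset.mem_filter, hDset, Finset.mem_filter, Finset.mem_product] at hq
          obtain ⟨⟨⟨hq1, _⟩, _⟩, _⟩ := hq
          rw [hGood, Finset.mem_filter, Finset.mem_product] at hq1
          exact hq1.1.1
        · intro q hq q' hq' heq
          try simp only [Finset.mem_coe] at hq hq'
          rw [Finset.mem_filter, hDset, Finset.mem_filter, Finset.mem_product] at hq hq'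
          obtain ⟨⟨⟨hqg1, hqg2⟩, hqΦ⟩, hqpp⟩ := hq
          obtain ⟨⟨⟨hqg1', hqg2'⟩, hqΦ'⟩, hqpp'⟩ := hq'
          rw [hGood, Finset.mem_filter, Finset.mem_product] at hqg1 hqg2 hqg1' hqg2'
          simp only [Prod.ext_iff] at hqpp hqpp'
          -- q.1 = q'.1
          have heq' : q.1.1 = q'.1.1 := heq
          have hfst : q.1 = q'.1 := Prod.ext heq' (Prod.ext
            (hqpp.1.1.trans hqpp'.1.1.symm) (hqpp.1.2.trans hqpp'.1.2.symm))
          -- now use H2 to show q.2.1 = q'.2.1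
          have hΦeq : Φ q.2 = Φ q'.2 := by
            rw [← hqΦ, ← hqΦ', hfst]
          rw [hΦ] at hΦeq
          simp only [Prod.mk.injEq] at hΦeq
          have h21 : q.2.2 = q'.2.2 := Prod.ext
            (hqpp.2.1.trans hqpp'.2.1.symm) (hqpp.2.2.trans hqpp'.2.2.symm)
          rw [h21] at hΦeq
          have hq22 : q'.2.2 = pp.2 := Prod.ext hqpp'.2.1 hqpp'.2.2
          have hsnd1 : q.2.1 = q'.2.1 := by
            apply H2 q'.2.2.1 (by rw [hq22]; exact hs2)
              q'.2.2.2 (by rw [hq22]; exact ht2)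
              (by rw [hq22]; exact hlt2)
              _ hqg2.1.1 _ hqg2'.1.1 hΦeq.1 hΦeq.2
          have hsnd : q.2 = q'.2 := Prod.ext hsnd1 h21
          exact Prod.ext hfst hsnd
      · rw [if_neg hd]
        have hne' : (pp.1.1, pp.1.2) ≠ (pp.2.1, pp.2.2) := by
          intro h
          simp only [Prod.mk.injEq] at h
          exact hd (Prod.ext h.1 h.2)
        calc (Dset.filter (fun q => (q.1.2, q.2.2) = pp)).card
            ≤ ((R ×ˢ R).filter fun rr =>
                w rr.1 pp.1.1 = w rr.2 pp.2.1 ∧ w rr.1 pp.1.2 = w rr.2 pp.2.2).card := by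
              apply Finset.card_le_card_of_injOn (fun q => (q.1.1, q.2.1))
              · intro q hq
                rw [Finset.mem_coe, Finset.mem_filter, hDset, Finset.mem_filter, Finset.mem_product] at hq
                obtain ⟨⟨⟨hqg1, hqg2⟩, hqΦ⟩, hqpp⟩ := hq
                rw [hGood, Finset.mem_filter, Finset.mem_product] at hqg1 hqg2
                simp only [Prod.ext_iff] at hqpp
                rw [Finset.mem_coe, Finset.mem_filter, Finset.mem_product]
                refine ⟨⟨hqg1.1.1, hqg2.1.1⟩, ?_⟩
                rw [hΦ] at hqΦ
                simp only [Prod.mk.injEq] at hqΦ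
                rw [← hqpp.1.1, ← hqpp.1.2, ← hqpp.2.1, ← hqpp.2.2]
                exact hqΦ
              · intro q hq q' hq' heq
                try simp only [Finset.mem_coe] at hq hq'
                rw [Finset.mem_filter] at hq hq'
                simp only [Prod.ext_iff] at heq hq hq'
                exact Prod.ext
                  (Prod.ext heq.1 (Prod.ext (hq.2.1.1.trans hq'.2.1.1.symm)
                    (hq.2.1.2.trans hq'.2.1.2.symm)))
                  (Prod.ext heq.2 (Prod.ext (hq.2.2.1.trans hq'.2.2.1.symm)
                    (hq.2.2.2.trans hq'.2.2.2.symm)))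
          _ ≤ 4 := H3 _ hs1 _ ht1 _ hs2 _ ht2 hlt1 hlt2 hne'
    calc ∑ pp ∈ consPairs S ×ˢ consPairs S,
          (Dset.filter (fun q => (q.1.2, q.2.2) = pp)).card
        ≤ ∑ pp ∈ consPairs S ×ˢ consPairs S, if pp.1 = pp.2 then N else 4 :=
          Finset.sum_le_sum hbound
      _ ≤ (L'+1) * N + 4 * (L'+1)^2 := by
          rw [Finset.sum_ite]
          have hdiag : ((consPairs S ×ˢ consPairs S).filter fun pp => pp.1 = pp.2).card
              ≤ L' + 1 := by
            calc ((consPairs S ×ˢ consPairs S).filter fun pp => pp.1 = pp.2).card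
                ≤ (consPairs S).card := by
                  apply Finset.card_le_card_of_injOn (fun pp => pp.1)
                  · intro pp hpp
                    rw [Finset.mem_coe, Finset.mem_filter, Finset.mem_product] at hpp
                    exact hpp.1.1
                  · intro pp hpp pp' hpp' heq
                    try simp only [Finset.mem_coe] at hpp hpp'
                    try rw [Finset.mem_filter] at hpp hpp'
                    have h1 : pp.1 = pp'.1 := heq
                    exact Prod.ext h1 (by rw [← hpp.2, ← hpp'.2]; exact h1)
              _ ≤ S.card := consPairs_card_le S
              _ = L' + 1 := hS
          have hoff : ((consPairs S ×ˢ consPairs S).filter fun pp => ¬pp.1 = pp.2).card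
              ≤ (L'+1)^2 := by
            calc ((consPairs S ×ˢ consPairs S).filter fun pp => ¬pp.1 = pp.2).card
                ≤ (consPairs S ×ˢ consPairs S).card := Finset.card_filter_le _ _
              _ = (consPairs S).card * (consPairs S).card := Finset.card_product _ _
              _ ≤ (L'+1) * (L'+1) := Nat.mul_le_mul
                  (le_trans (consPairs_card_le S) hS.le) (le_trans (consPairs_card_le S) hS.le)
              _ = (L'+1)^2 := (sq _).symm
          rw [Finset.sum_const, Finset.sum_const, smul_eq_mul, smul_eq_mul]
          calc _ ≤ (L'+1) * N + ((L'+1)^2) * 4 :=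
                Nat.add_le_add (Nat.mul_le_mul_right N hdiag) (Nat.mul_le_mul_right 4 hoff)
            _ = (L'+1) * N + 4 * (L'+1)^2 := by ring
  -- final assembly
  have h3 : L' * P.card ≤ 3 * K^2 := by
    calc L' * P.card ≤ L' * (K * g) := Nat.mul_le_mul_left L' hPcard
      _ = K * (g * L') := by ring
      _ ≤ K * (2 * K + L') := Nat.mul_le_mul_left K hgL'
      _ ≤ K * (2 * K + K) := Nat.mul_le_mul_left K (by omega)
      _ = 3 * K^2 := by ring
  calc N^2 * L'^3 = L' * (N * L')^2 := by ring
    _ ≤ L' * (2 * Good.card)^2 := Nat.mul_le_mul_left L' (Nat.pow_le_pow_left hGoodcard 2)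
    _ = 4 * L' * Good.card^2 := by ring
    _ ≤ 4 * L' * (P.card * Dset.card) := Nat.mul_le_mul_left _ hCS
    _ = 4 * (L' * P.card) * Dset.card := by ring
    _ ≤ 4 * (3 * K^2) * Dset.card := Nat.mul_le_mul_right _ (Nat.mul_le_mul_left 4 h3)
    _ = 12 * K^2 * Dset.card := by ring
    _ ≤ 12 * K^2 * ((L'+1) * N + 4 * (L'+1)^2) := Nat.mul_le_mul_left _ hDbound
    _ = 12 * K^2 * (N * (L'+1) + 4 * (L'+1)^2) := by ring

lemma quad_fiber (p q v : ℝ) (hp : p ≠ 0) (X : Finset ℝ) :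
    (X.filter fun x => p*x^2 + q*x = v).card ≤ 2 := by
  classical
  set F : Polynomial ℝ := Polynomial.C p * Polynomial.X^2 + Polynomial.C q * Polynomial.X
    - Polynomial.C v with hF
  have hF0 : F ≠ 0 := by
    intro h
    have : F.coeff 2 = p := by
      simp [hF, Polynomial.coeff_add, Polynomial.coeff_sub, Polynomial.coeff_C_mul,
        Polynomial.coeff_X_pow, Polynomial.coeff_X, Polynomial.coeff_C]
    rw [h] at this
    simp at this
    exact hp this.symm
  have hdeg : F.natDegree ≤ 2 := by rw [hF]; compute_degree
  calc (X.filter fun x => p*x^2 + q*x = v).card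
      ≤ F.roots.toFinset.card := by
        apply Finset.card_le_card_of_injOn id
        · intro x hx
          rw [Finset.mem_coe, Finset.mem_filter] at hx
          rw [Finset.mem_coe, Multiset.mem_toFinset, Polynomial.mem_roots hF0]
          simp only [Polynomial.IsRoot, hF, Polynomial.eval_add, Polynomial.eval_sub,
            Polynomial.eval_mul, Polynomial.eval_pow, Polynomial.eval_C, Polynomial.eval_X, id]
          linarith [hx.2]
        · intro a _ b _ h; exact h
    _ ≤ Multiset.card F.roots := Multiset.toFinset_card_le _
    _ ≤ F.natDegree := F.card_roots'
    _ ≤ 2 := hdeg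

lemma card_le_two_mul_image_card (X : Finset ℝ) (φ : ℝ → ℝ) (C : Finset ℝ)
    (hmem : ∀ x ∈ X, φ x ∈ C) (hfib : ∀ v, (X.filter fun x => φ x = v).card ≤ 2) :
    X.card ≤ 2 * C.card := by
  classical
  calc X.card = ∑ v ∈ C, (X.filter fun x => φ x = v).card :=
      Finset.card_eq_sum_card_fiberwise hmem
    _ ≤ ∑ _v ∈ C, 2 := Finset.sum_le_sum (fun v _ => hfib v)
    _ = 2 * C.card := by rw [Finset.sum_const, smul_eq_mul, mul_comm]

open Finset in
lemma abstract_master (w : ℝ → ℝ → ℝ) (R S : Finset ℝ)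
    (hR : R.Nonempty) (hS : S.Nonempty)
    (H1 : ∀ r ∈ R, ∀ s ∈ S, ∀ t ∈ S, s < t → w r s < w r t)
    (H2 : ∀ s ∈ S, ∀ t ∈ S, s < t → ∀ r ∈ R, ∀ r' ∈ R,
        w r s = w r' s → w r t = w r' t → r = r')
    (H3 : ∀ s ∈ S, ∀ t ∈ S, ∀ s' ∈ S, ∀ t' ∈ S, s < t → s' < t' → (s,t) ≠ (s',t') →
      ((R ×ˢ R).filter fun rr => w rr.1 s = w rr.2 s' ∧ w rr.1 t = w rr.2 t').card ≤ 4)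
    (H4 : R.card ≤ 2 * (Finset.image₂ w R S).card) :
    R.card^2 * S.card^2 ≤ 576 * (Finset.image₂ w R S).card^3 := by
  classical
  set C : Finset ℝ := Finset.image₂ w R S with hC
  set K : ℕ := C.card with hK
  set N : ℕ := R.card with hN
  have hK1 : 1 ≤ K := by
    obtain ⟨r₀, hr₀⟩ := hR
    obtain ⟨s₀, hs₀⟩ := hS
    exact Finset.card_pos.mpr ⟨w r₀ s₀, Finset.mem_image₂_of_mem hr₀ hs₀⟩
  have hKL : S.card ≤ K := by
    obtain ⟨r₀, hr₀⟩ := hR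
    apply Finset.card_le_card_of_injOn (fun s => w r₀ s)
    · intro s hs; exact Finset.mem_image₂_of_mem hr₀ hs
    · intro s hs t ht h
      simp only [Finset.mem_coe] at hs ht
      by_contra hne
      rcases lt_or_gt_of_ne hne with hlt | hlt
      · exact absurd h (ne_of_lt (H1 r₀ hr₀ s hs t ht hlt))
      · exact absurd h.symm (ne_of_lt (H1 r₀ hr₀ t ht s hs hlt))
  rcases Nat.exists_eq_add_of_le (Finset.card_pos.mpr hS) with ⟨L', hL'⟩
  -- S.card = 1 + L'
  rcases Nat.eq_zero_or_pos L' with hL0 | hL1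
  · -- S.card = 1
    rw [hL', hL0]
    have h1 : N^2 ≤ 4 * K^2 := by nlinarith [H4]
    have h2 : K^2 ≤ K^3 := Nat.pow_le_pow_right (by omega) (by omega)
    nlinarith
  · have hcard : S.card = L' + 1 := by omega
    have hcount := abstract_count w R S L' hR hcard hL1 H1 H2 H3
    rw [← hC, ← hK, ← hN] at hcount
    have hstep : N * (L'+1) + 4 * (L'+1)^2 ≤ 12 * K * L' := by
      have hLK : L' + 1 ≤ K := by omega
      have hL2 : L' + 1 ≤ 2 * L' := by omega
      calc N * (L'+1) + 4 * (L'+1)^2 = N * (L'+1) + 4 * (L'+1) * (L'+1) := by ring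
        _ ≤ (2*K) * (L'+1) + 4 * (L'+1) * K :=
            Nat.add_le_add (Nat.mul_le_mul_right _ H4) (Nat.mul_le_mul_left _ hLK)
        _ = 6 * K * (L' + 1) := by ring
        _ ≤ 6 * K * (2 * L') := Nat.mul_le_mul_left _ hL2
        _ = 12 * K * L' := by ring
    have hmain : N^2 * L'^3 ≤ 144 * K^3 * L' := by
      calc N^2 * L'^3 ≤ 12 * K^2 * (N * (L'+1) + 4 * (L'+1)^2) := hcount
        _ ≤ 12 * K^2 * (12 * K * L') := Nat.mul_le_mul_left _ hstep
        _ = 144 * K^3 * L' := by ring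
    have hcancel : N^2 * L'^2 ≤ 144 * K^3 := by
      have h1 : (N^2 * L'^2) * L' ≤ (144 * K^3) * L' := by
        calc (N^2 * L'^2) * L' = N^2 * L'^3 := by ring
          _ ≤ 144 * K^3 * L' := hmain
      exact Nat.le_of_mul_le_mul_right h1 hL1
    calc N^2 * S.card^2 = N^2 * (L'+1)^2 := by rw [hcard]
      _ ≤ N^2 * (2*L')^2 := Nat.mul_le_mul_left _ (Nat.pow_le_pow_left (by omega) 2)
      _ = 4 * (N^2 * L'^2) := by ring
      _ ≤ 4 * (144 * K^3) := Nat.mul_le_mul_left _ hcancel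
      _ = 576 * K^3 := by ring

open Finset in
lemma leaf_pos (R S : Finset ℝ) (hR : R.Nonempty) (hS : S.Nonempty)
    (hRpos : ∀ r ∈ R, 0 < r) (hSpos : ∀ s ∈ S, 0 < s) :
    R.card^2 * S.card^2 ≤ 576 * (Finset.image₂ (fun r s => r^2*s + r*s^2) R S).card^3 := by
  set w : ℝ → ℝ → ℝ := fun r s => r^2*s + r*s^2 with hw
  have H1 : ∀ r ∈ R, ∀ s ∈ S, ∀ t ∈ S, s < t → w r s < w r t := by
    intro r hr s hs t ht hst
    have hr0 := hRpos r hr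
    have hs0 := hSpos s hs
    have ht0 := hSpos t ht
    have key : w r t - w r s = r*(t-s)*(r+s+t) := by rw [hw]; ring
    have : 0 < r*(t-s)*(r+s+t) :=
      mul_pos (mul_pos hr0 (by linarith)) (by linarith)
    linarith [key ▸ this]
  have H2 : ∀ s ∈ S, ∀ t ∈ S, s < t → ∀ r ∈ R, ∀ r' ∈ R,
      w r s = w r' s → w r t = w r' t → r = r' := by
    intro s hs t ht hst r hr r' hr' h1 _
    have hs0 := hSpos s hs
    have hr0 := hRpos r hr
    have hr0' := hRpos r' hr'
    have e1 : (r - r')*s*(r + r' + s) = 0 := by rw [hw] at h1; linear_combination h1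
    have hpos : s*(r + r' + s) > 0 := mul_pos hs0 (by linarith)
    by_contra hne
    have : (r - r') * (s * (r + r' + s)) ≠ 0 :=
      mul_ne_zero (sub_ne_zero.mpr hne) (ne_of_gt hpos)
    exact this (by linarith [e1, mul_assoc (r-r') s (r+r'+s)])
  have H3 : ∀ s ∈ S, ∀ t ∈ S, ∀ s' ∈ S, ∀ t' ∈ S, s < t → s' < t' → (s,t) ≠ (s',t') →
      ((R ×ˢ R).filter fun rr => w rr.1 s = w rr.2 s' ∧ w rr.1 t = w rr.2 t').card ≤ 4 := by
    intro s hs t ht s' hs' t' ht' hlt hlt' hne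
    apply conic_card_le 1 s t s' t' (Or.inl rfl)
      (ne_of_gt (hSpos s hs)) (ne_of_gt (hSpos t ht))
      (ne_of_gt (hSpos s' hs')) (ne_of_gt (hSpos t' ht')) (ne_of_lt hlt) hne
    intro x hx
    rw [Finset.mem_filter] at hx
    rw [hw] at hx
    constructor
    · linear_combination hx.2.1
    · linear_combination hx.2.2
  have H4 : R.card ≤ 2 * (Finset.image₂ w R S).card := by
    obtain ⟨s₀, hs₀⟩ := hS
    apply card_le_two_mul_image_card R (fun r => w r s₀)
    · intro x hx; exact Finset.mem_image₂_of_mem hx hs₀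
    · intro v
      refine le_trans (le_of_eq ?_) (quad_fiber s₀ (s₀^2) v (ne_of_gt (hSpos s₀ hs₀)) R)
      congr 1
      apply Finset.filter_congr
      intro x _
      rw [hw]
      constructor <;> intro h <;> linear_combination h
  exact abstract_master w R S hR hS H1 H2 H3 H4

open Finset in
lemma leaf_mix (R S : Finset ℝ) (hR : R.Nonempty) (hS : S.Nonempty)
    (hRpos : ∀ r ∈ R, 0 < r) (hSpos : ∀ s ∈ S, 0 < s)
    (hle : ∀ r ∈ R, ∀ s ∈ S, r ≤ s) :
    R.card^2 * S.card^2 ≤ 576 * (Finset.image₂ (fun r s => r*s^2 - r^2*s) R S).card^3 := by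
  set w : ℝ → ℝ → ℝ := fun r s => r*s^2 - r^2*s with hw
  have H1 : ∀ r ∈ R, ∀ s ∈ S, ∀ t ∈ S, s < t → w r s < w r t := by
    intro r hr s hs t ht hst
    have hr0 := hRpos r hr
    have hrs := hle r hr s hs
    have key : w r t - w r s = r*(t-s)*(s+t-r) := by rw [hw]; ring
    have : 0 < r*(t-s)*(s+t-r) :=
      mul_pos (mul_pos hr0 (by linarith)) (by linarith [hSpos t ht])
    linarith [key ▸ this]
  have H2 : ∀ s ∈ S, ∀ t ∈ S, s < t → ∀ r ∈ R, ∀ r' ∈ R,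
      w r s = w r' s → w r t = w r' t → r = r' := by
    intro s hs t ht hst r hr r' hr' h1 h2
    have hs0 := hSpos s hs
    have ht0 := hSpos t ht
    by_contra hne
    have e1 : (r - r') * (s * (s - (r + r'))) = 0 := by
      rw [hw] at h1; linear_combination h1
    have e2 : (r - r') * (t * (t - (r + r'))) = 0 := by
      rw [hw] at h2; linear_combination h2
    have hrr' : r - r' ≠ 0 := sub_ne_zero.mpr hne
    have f1 : s * (s - (r + r')) = 0 := by
      rcases mul_eq_zero.mp e1 with h | h
      · exact absurd h hrr'
      · exact h
    have f2 : t * (t - (r + r')) = 0 := by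
      rcases mul_eq_zero.mp e2 with h | h
      · exact absurd h hrr'
      · exact h
    have g1 : s = r + r' := by
      rcases mul_eq_zero.mp f1 with h | h
      · exact absurd h (ne_of_gt hs0)
      · linarith [sub_eq_zero.mp h]
    have g2 : t = r + r' := by
      rcases mul_eq_zero.mp f2 with h | h
      · exact absurd h (ne_of_gt ht0)
      · linarith [sub_eq_zero.mp h]
    linarith
  have H3 : ∀ s ∈ S, ∀ t ∈ S, ∀ s' ∈ S, ∀ t' ∈ S, s < t → s' < t' → (s,t) ≠ (s',t') →
      ((R ×ˢ R).filter fun rr => w rr.1 s = w rr.2 s' ∧ w rr.1 t = w rr.2 t').card ≤ 4 := by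
    intro s hs t ht s' hs' t' ht' hlt hlt' hne
    apply conic_card_le (-1) s t s' t' (Or.inr rfl)
      (ne_of_gt (hSpos s hs)) (ne_of_gt (hSpos t ht))
      (ne_of_gt (hSpos s' hs')) (ne_of_gt (hSpos t' ht')) (ne_of_lt hlt) hne
    intro x hx
    rw [Finset.mem_filter] at hx
    rw [hw] at hx
    constructor
    · linear_combination -hx.2.1
    · linear_combination -hx.2.2
  have H4 : R.card ≤ 2 * (Finset.image₂ w R S).card := by
    obtain ⟨s₀, hs₀⟩ := hS
    apply card_le_two_mul_image_card R (fun r => w r s₀)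
    · intro x hx; exact Finset.mem_image₂_of_mem hx hs₀
    · intro v
      refine le_trans (le_of_eq ?_) (quad_fiber (-s₀) (s₀^2) v
        (neg_ne_zero.mpr (ne_of_gt (hSpos s₀ hs₀))) R)
      congr 1
      apply Finset.filter_congr
      intro x _
      rw [hw]
      constructor <;> intro h <;> linear_combination h
  exact abstract_master w R S hR hS H1 H2 H3 H4

open Finset in
lemma fin_count_le (n k : ℕ) (h : k < n) :
    (Finset.univ.filter (fun i : Fin n => i.val ≤ k)).card = k + 1 := by
  rw [← Finset.card_range (k+1)]
  apply Finset.card_bij (fun i _ => i.val)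
  · intro i hi; rw [Finset.mem_filter] at hi; rw [Finset.mem_range]; omega
  · intro a ha b hb hab; exact Fin.val_injective hab
  · intro j hj
    rw [Finset.mem_range] at hj
    refine ⟨⟨j, by omega⟩, ?_, rfl⟩
    rw [Finset.mem_filter]
    exact ⟨Finset.mem_univ _, by simp; omega⟩

open Finset in
lemma fin_count_ge (n k : ℕ) (h : k < n) :
    (Finset.univ.filter (fun i : Fin n => k ≤ i.val)).card = n - k := by
  rw [← Finset.card_range (n - k)]
  apply Finset.card_bij (fun i _ => i.val - k)
  · intro i hi; rw [Finset.mem_filter] at hi; rw [Finset.mem_range]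
    have := i.isLt; omega
  · intro a ha b hb hab
    rw [Finset.mem_filter] at ha hb
    apply Fin.val_injective
    omega
  · intro j hj
    rw [Finset.mem_range] at hj
    refine ⟨⟨j + k, by omega⟩, ?_, by simp⟩
    rw [Finset.mem_filter]
    exact ⟨Finset.mem_univ _, by simp⟩

open Finset in
lemma median_split (X : Finset ℝ) (hX : X.Nonempty) :
    ∃ θ : ℝ, X.card / 2 ≤ (X.filter (fun x => x ≤ θ)).card ∧
      X.card / 2 ≤ (X.filter (fun x => θ ≤ x)).card := by
  classical
  have hn : 0 < X.card := Finset.card_pos.mpr hX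
  set n := X.card with hndef
  have hk : n / 2 < n := Nat.div_lt_self hn (by norm_num)
  set emb := X.orderEmbOfFin (rfl : X.card = n) with hemb
  set θ := emb ⟨n/2, hk⟩ with hθ
  refine ⟨θ, ?_, ?_⟩
  · have h1 : (Finset.univ.filter (fun i : Fin n => i.val ≤ n/2)).card ≤
        (X.filter (fun x => x ≤ θ)).card := by
      apply Finset.card_le_card_of_injOn emb
      · intro i hi
        rw [Finset.mem_coe, Finset.mem_filter] at hi ⊢
        refine ⟨Finset.orderEmbOfFin_mem X rfl i, ?_⟩
        rw [hθ]
        exact emb.le_iff_le.mpr (by exact hi.2)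
      · exact emb.injective.injOn
    rw [fin_count_le n (n/2) hk] at h1
    omega
  · have h1 : (Finset.univ.filter (fun i : Fin n => n/2 ≤ i.val)).card ≤
        (X.filter (fun x => θ ≤ x)).card := by
      apply Finset.card_le_card_of_injOn emb
      · intro i hi
        rw [Finset.mem_coe, Finset.mem_filter] at hi ⊢
        refine ⟨Finset.orderEmbOfFin_mem X rfl i, ?_⟩
        rw [hθ]
        exact emb.le_iff_le.mpr (by exact hi.2)
      · exact emb.injective.injOn
    rw [fin_count_ge n (n/2) hk] at h1
    omega

open Finset in
lemma helper_pos (X Y F : Finset ℝ) (hX : X.Nonempty) (hY : Y.Nonempty)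
    (hXpos : ∀ x ∈ X, 0 < x) (hYpos : ∀ y ∈ Y, 0 < y)
    (h : (Finset.image₂ (fun r s => r^2*s + r*s^2) X Y).card ≤ F.card) :
    (X.card/2)^2 * (Y.card/2)^2 ≤ 576 * F.card^3 := by
  have hleaf := leaf_pos X Y hX hY hXpos hYpos
  have hcube : (Finset.image₂ (fun r s => r^2*s + r*s^2) X Y).card^3 ≤ F.card^3 :=
    Nat.pow_le_pow_left h 3
  calc (X.card/2)^2 * (Y.card/2)^2 ≤ X.card^2 * Y.card^2 :=
      Nat.mul_le_mul (Nat.pow_le_pow_left (Nat.div_le_self _ _) 2)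
        (Nat.pow_le_pow_left (Nat.div_le_self _ _) 2)
    _ ≤ 576 * (Finset.image₂ (fun r s => r^2*s + r*s^2) X Y).card^3 := hleaf
    _ ≤ 576 * F.card^3 := Nat.mul_le_mul_left _ hcube

open Finset in
lemma helper_mix (X Y F : Finset ℝ) (hX : X.Nonempty) (hY : Y.Nonempty)
    (hXpos : ∀ x ∈ X, 0 < x) (hYpos : ∀ y ∈ Y, 0 < y)
    (h1 : ∀ X' Y' : Finset ℝ, X' ⊆ X → Y' ⊆ Y →
       (Finset.image₂ (fun r s => r*s^2 - r^2*s) X' Y').card ≤ F.card)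
    (h2 : ∀ Y' X' : Finset ℝ, Y' ⊆ Y → X' ⊆ X →
       (Finset.image₂ (fun r s => r*s^2 - r^2*s) Y' X').card ≤ F.card) :
    (X.card/2)^2 * (Y.card/2)^2 ≤ 576 * F.card^3 := by
  classical
  rcases Nat.eq_zero_or_pos (X.card/2) with h0 | hX2
  · rw [h0]; simp
  rcases Nat.eq_zero_or_pos (Y.card/2) with h0 | hY2
  · rw [h0]; simp
  obtain ⟨θ, hlo, hhi⟩ := median_split X hX
  set Xlo := X.filter (fun x => x ≤ θ) with hXlo
  set Xhi := X.filter (fun x => θ ≤ x) with hXhi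
  set Ylo := Y.filter (fun y => y ≤ θ) with hYlo
  set Yhi := Y.filter (fun y => θ ≤ y) with hYhi
  have hYsplit : Y.card ≤ Ylo.card + Yhi.card := by
    calc Y.card ≤ (Ylo ∪ Yhi).card := Finset.card_le_card (by
        intro y hy
        rw [Finset.mem_union, hYlo, hYhi, Finset.mem_filter, Finset.mem_filter]
        rcases le_total y θ with h | h
        · exact Or.inl ⟨hy, h⟩
        · exact Or.inr ⟨hy, h⟩)
      _ ≤ Ylo.card + Yhi.card := Finset.card_union_le _ _
  rcases le_or_gt (Y.card/2) Yhi.card with hcase | hcase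
  · -- use rows Xlo, cols Yhi
    have hXlone : Xlo.Nonempty := Finset.card_pos.mp (by omega)
    have hYhine : Yhi.Nonempty := Finset.card_pos.mp (by omega)
    have hleaf := leaf_mix Xlo Yhi hXlone hYhine
      (fun x hx => hXpos x (Finset.mem_of_mem_filter x hx))
      (fun y hy => hYpos y (Finset.mem_of_mem_filter y hy))
      (fun r hr s hs => le_trans (Finset.mem_filter.mp hr).2 (Finset.mem_filter.mp hs).2)
    have hcube := Nat.pow_le_pow_left (h1 Xlo Yhi (Finset.filter_subset _ _)
      (Finset.filter_subset _ _)) 3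
    calc (X.card/2)^2 * (Y.card/2)^2 ≤ Xlo.card^2 * Yhi.card^2 :=
        Nat.mul_le_mul (Nat.pow_le_pow_left hlo 2) (Nat.pow_le_pow_left hcase 2)
      _ ≤ 576 * (Finset.image₂ (fun r s => r*s^2 - r^2*s) Xlo Yhi).card^3 := hleaf
      _ ≤ 576 * F.card^3 := Nat.mul_le_mul_left _ hcube
  · -- use rows Ylo, cols Xhi
    have hYlo2 : Y.card/2 ≤ Ylo.card := by omega
    have hYlone : Ylo.Nonempty := Finset.card_pos.mp (by omega)
    have hXhine : Xhi.Nonempty := Finset.card_pos.mp (by omega)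
    have hleaf := leaf_mix Ylo Xhi hYlone hXhine
      (fun y hy => hYpos y (Finset.mem_of_mem_filter y hy))
      (fun x hx => hXpos x (Finset.mem_of_mem_filter x hx))
      (fun r hr s hs => le_trans (Finset.mem_filter.mp hr).2 (Finset.mem_filter.mp hs).2)
    have hcube := Nat.pow_le_pow_left (h2 Ylo Xhi (Finset.filter_subset _ _)
      (Finset.filter_subset _ _)) 3
    calc (X.card/2)^2 * (Y.card/2)^2 ≤ Xhi.card^2 * Ylo.card^2 :=
        Nat.mul_le_mul (Nat.pow_le_pow_left hhi 2) (Nat.pow_le_pow_left hYlo2 2)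
      _ = Ylo.card^2 * Xhi.card^2 := by ring
      _ ≤ 576 * (Finset.image₂ (fun r s => r*s^2 - r^2*s) Ylo Xhi).card^3 := hleaf
      _ ≤ 576 * F.card^3 := Nat.mul_le_mul_left _ hcube

open Finset in
lemma main_nat (A B : Finset ℝ) (hA : A.Nonempty) (hB : B.Nonempty)
    (hA0 : ∀ a ∈ A, a ≠ 0) (hB0 : ∀ b ∈ B, b ≠ 0) :
    (A.card - 2)^2 * (B.card - 2)^2 ≤
      147456 * ((Finset.image₂ (fun x y => x*y*(x+y)) A B).card)^3 := by
  classical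
  set F := Finset.image₂ (fun x y : ℝ => x*y*(x+y)) A B with hF
  by_cases hsmall : A.card ≤ 2 ∨ B.card ≤ 2
  · rcases hsmall with h | h
    · have : A.card - 2 = 0 := by omega
      rw [this]; simp
    · have : B.card - 2 = 0 := by omega
      rw [this]; simp
  push_neg at hsmall
  obtain ⟨hA3, hB3⟩ := hsmall
  set AP := A.filter (fun a => 0 < a) with hAP
  set AN := (A.filter (fun a => a < 0)).image (fun a => -a) with hAN
  set BP := B.filter (fun b => 0 < b) with hBP
  set BN := (B.filter (fun b => b < 0)).image (fun b => -b) with hBN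
  have hAPpos : ∀ x ∈ AP, 0 < x := fun x hx => (Finset.mem_filter.mp hx).2
  have hBPpos : ∀ x ∈ BP, 0 < x := fun x hx => (Finset.mem_filter.mp hx).2
  have hANpos : ∀ x ∈ AN, 0 < x := by
    intro x hx
    rw [hAN, Finset.mem_image] at hx
    obtain ⟨a, ha, rfl⟩ := hx
    linarith [(Finset.mem_filter.mp ha).2]
  have hBNpos : ∀ x ∈ BN, 0 < x := by
    intro x hx
    rw [hBN, Finset.mem_image] at hx
    obtain ⟨b, hb, rfl⟩ := hx
    linarith [(Finset.mem_filter.mp hb).2]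
  have hAPmem : ∀ x ∈ AP, x ∈ A := fun x hx => Finset.mem_of_mem_filter x hx
  have hBPmem : ∀ x ∈ BP, x ∈ B := fun x hx => Finset.mem_of_mem_filter x hx
  have hANmem : ∀ x ∈ AN, -x ∈ A := by
    intro x hx
    rw [hAN, Finset.mem_image] at hx
    obtain ⟨a, ha, rfl⟩ := hx
    rw [neg_neg]
    exact Finset.mem_of_mem_filter a ha
  have hBNmem : ∀ x ∈ BN, -x ∈ B := by
    intro x hx
    rw [hBN, Finset.mem_image] at hx
    obtain ⟨b, hb, rfl⟩ := hx
    rw [neg_neg]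
    exact Finset.mem_of_mem_filter b hb
  have hAcard : A.card ≤ AP.card + AN.card := by
    have h1 : AN.card = (A.filter (fun a => a < 0)).card :=
      Finset.card_image_of_injective _ neg_injective
    calc A.card ≤ (AP ∪ A.filter (fun a => a < 0)).card := Finset.card_le_card (by
        intro a ha
        rw [Finset.mem_union, hAP, Finset.mem_filter, Finset.mem_filter]
        rcases lt_or_gt_of_ne (hA0 a ha) with h | h
        · exact Or.inr ⟨ha, h⟩
        · exact Or.inl ⟨ha, h⟩)
      _ ≤ AP.card + (A.filter (fun a => a < 0)).card := Finset.card_union_le _ _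
      _ = AP.card + AN.card := by rw [h1]
  have hBcard : B.card ≤ BP.card + BN.card := by
    have h1 : BN.card = (B.filter (fun b => b < 0)).card :=
      Finset.card_image_of_injective _ neg_injective
    calc B.card ≤ (BP ∪ B.filter (fun b => b < 0)).card := Finset.card_le_card (by
        intro b hb
        rw [Finset.mem_union, hBP, Finset.mem_filter, Finset.mem_filter]
        rcases lt_or_gt_of_ne (hB0 b hb) with h | h
        · exact Or.inr ⟨hb, h⟩
        · exact Or.inl ⟨hb, h⟩)
      _ ≤ BP.card + (B.filter (fun b => b < 0)).card := Finset.card_union_le _ _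
      _ = BP.card + BN.card := by rw [h1]
  have hnegcard : (F.image (fun v => -v)).card = F.card :=
    Finset.card_image_of_injective _ neg_injective
  -- shared finale
  have finish : ∀ (X Y : Finset ℝ), A.card ≤ 2*X.card → B.card ≤ 2*Y.card →
      (X.card/2)^2*(Y.card/2)^2 ≤ 576*F.card^3 →
      (A.card-2)^2*(B.card-2)^2 ≤ 147456*F.card^3 := by
    intro X Y hX2 hY2 hmain
    have e1 : A.card - 2 ≤ 4 * (X.card/2) := by omega
    have e2 : B.card - 2 ≤ 4 * (Y.card/2) := by omega
    calc (A.card-2)^2*(B.card-2)^2 ≤ (4*(X.card/2))^2 * (4*(Y.card/2))^2 :=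
        Nat.mul_le_mul (Nat.pow_le_pow_left e1 2) (Nat.pow_le_pow_left e2 2)
      _ = 256 * ((X.card/2)^2 * (Y.card/2)^2) := by ring
      _ ≤ 256 * (576 * F.card^3) := Nat.mul_le_mul_left _ hmain
      _ = 147456 * F.card^3 := by ring
  rcases le_total AN.card AP.card with hAc | hAc
  · -- X = AP
    have hX2 : A.card ≤ 2 * AP.card := by omega
    have hXne : AP.Nonempty := Finset.card_pos.mp (by omega)
    rcases le_total BN.card BP.card with hBc | hBc
    · -- (+,+)
      have hY2 : B.card ≤ 2 * BP.card := by omega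
      have hYne : BP.Nonempty := Finset.card_pos.mp (by omega)
      apply finish AP BP hX2 hY2
      apply helper_pos AP BP F hXne hYne hAPpos hBPpos
      apply Finset.card_le_card
      intro v hv
      rw [Finset.mem_image₂] at hv
      obtain ⟨x, hx, y, hy, rfl⟩ := hv
      exact Finset.mem_image₂.mpr ⟨x, hAPmem x hx, y, hBPmem y hy, by ring⟩
    · -- (+,-)
      have hY2 : B.card ≤ 2 * BN.card := by omega
      have hYne : BN.Nonempty := Finset.card_pos.mp (by omega)
      apply finish AP BN hX2 hY2
      apply helper_mix AP BN F hXne hYne hAPpos hBNpos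
      · intro X' Y' hX' hY'
        apply Finset.card_le_card
        intro v hv
        rw [Finset.mem_image₂] at hv
        obtain ⟨x, hx, y, hy, rfl⟩ := hv
        exact Finset.mem_image₂.mpr ⟨x, hAPmem x (hX' hx), -y, hBNmem y (hY' hy), by ring⟩
      · intro Y' X' hY' hX'
        calc (Finset.image₂ (fun r s => r*s^2 - r^2*s) Y' X').card
            ≤ (F.image (fun v => -v)).card := Finset.card_le_card (by
              intro v hv
              rw [Finset.mem_image₂] at hv
              obtain ⟨y, hy, x, hx, rfl⟩ := hv
              rw [Finset.mem_image]
              refine ⟨(x*(-y)*(x + -y)), ?_, by ring⟩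
              exact Finset.mem_image₂.mpr ⟨x, hAPmem x (hX' hx), -y, hBNmem y (hY' hy), rfl⟩)
          _ = F.card := hnegcard
  · -- X = AN
    have hX2 : A.card ≤ 2 * AN.card := by omega
    have hXne : AN.Nonempty := Finset.card_pos.mp (by omega)
    rcases le_total BN.card BP.card with hBc | hBc
    · -- (-,+)
      have hY2 : B.card ≤ 2 * BP.card := by omega
      have hYne : BP.Nonempty := Finset.card_pos.mp (by omega)
      apply finish AN BP hX2 hY2
      apply helper_mix AN BP F hXne hYne hANpos hBPpos
      · intro X' Y' hX' hY'
        calc (Finset.image₂ (fun r s => r*s^2 - r^2*s) X' Y').card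
            ≤ (F.image (fun v => -v)).card := Finset.card_le_card (by
              intro v hv
              rw [Finset.mem_image₂] at hv
              obtain ⟨x, hx, y, hy, rfl⟩ := hv
              rw [Finset.mem_image]
              refine ⟨((-x)*y*((-x) + y)), ?_, by ring⟩
              exact Finset.mem_image₂.mpr ⟨-x, hANmem x (hX' hx), y, hBPmem y (hY' hy), rfl⟩)
          _ = F.card := hnegcard
      · intro Y' X' hY' hX'
        apply Finset.card_le_card
        intro v hv
        rw [Finset.mem_image₂] at hv
        obtain ⟨y, hy, x, hx, rfl⟩ := hv
        exact Finset.mem_image₂.mpr ⟨-x, hANmem x (hX' hx), y, hBPmem y (hY' hy), by ring⟩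
    · -- (-,-)
      have hY2 : B.card ≤ 2 * BN.card := by omega
      have hYne : BN.Nonempty := Finset.card_pos.mp (by omega)
      apply finish AN BN hX2 hY2
      apply helper_pos AN BN F hXne hYne hANpos hBNpos
      calc (Finset.image₂ (fun r s => r^2*s + r*s^2) AN BN).card
          ≤ (F.image (fun v => -v)).card := Finset.card_le_card (by
            intro v hv
            rw [Finset.mem_image₂] at hv
            obtain ⟨x, hx, y, hy, rfl⟩ := hv
            rw [Finset.mem_image]
            refine ⟨((-x)*(-y)*((-x) + -y)), ?_, by ring⟩
            exact Finset.mem_image₂.mpr ⟨-x, hANmem x hx, -y, hBNmem y hy, rfl⟩)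
        _ = F.card := hnegcard

open Finset in
lemma trivial_A (A B : Finset ℝ) (hB : B.Nonempty) (hB0 : ∀ b ∈ B, b ≠ 0) :
    A.card ≤ 2 * (Finset.image₂ (fun x y => x*y*(x+y)) A B).card := by
  classical
  obtain ⟨b₀, hb₀⟩ := hB
  apply card_le_two_mul_image_card A (fun a => a*b₀*(a+b₀))
  · intro a ha; exact Finset.mem_image₂_of_mem ha hb₀
  · intro v
    refine le_trans (le_of_eq ?_) (quad_fiber b₀ (b₀^2) v (hB0 b₀ hb₀) A)
    congr 1
    apply Finset.filter_congr
    intro x _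
    constructor <;> intro h <;> linear_combination h

open Finset in
lemma trivial_B (A B : Finset ℝ) (hA : A.Nonempty) (hA0 : ∀ a ∈ A, a ≠ 0) :
    B.card ≤ 2 * (Finset.image₂ (fun x y => x*y*(x+y)) A B).card := by
  classical
  obtain ⟨a₀, ha₀⟩ := hA
  apply card_le_two_mul_image_card B (fun b => a₀*b*(a₀+b))
  · intro b hb; exact Finset.mem_image₂_of_mem ha₀ hb
  · intro v
    refine le_trans (le_of_eq ?_) (quad_fiber a₀ (a₀^2) v (hA0 a₀ ha₀) B)
    congr 1
    apply Finset.filter_congr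
    intro x _
    constructor <;> intro h <;> linear_combination h


set_option maxHeartbeats 1000000 in
/-- Proposition 7.2: there is an absolute `κ > 0` such that for `f(x,y) = xy(x+y)` and
all nonempty finite sets `A, B` of nonzero reals, `|f(A,B)| ≥ κ·|A|^{2/3}·|B|^{2/3}`. -/
theorem stmt_18 : ∃ κ : ℝ, 0 < κ ∧ ∀ A B : Finset ℝ, A.Nonempty → B.Nonempty →
    (∀ a ∈ A, a ≠ 0) → (∀ b ∈ B, b ≠ 0) →
      ((Finset.image₂ (fun x y => x * y * (x + y)) A B).card : ℝ) ≥
        κ * (A.card : ℝ) ^ ((2 : ℝ) / 3) * (B.card : ℝ) ^ ((2 : ℝ) / 3) := by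

  classical
  refine ⟨1/1000, by norm_num, ?_⟩
  intro A B hA hB hA0 hB0
  set F := Finset.image₂ (fun x y : ℝ => x * y * (x + y)) A B with hF
  set n := A.card with hn
  set m := B.card with hm
  set K := F.card with hK
  have hn1 : 1 ≤ n := Finset.card_pos.mpr hA
  have hm1 : 1 ≤ m := Finset.card_pos.mpr hB
  have hK1 : 1 ≤ K := by
    obtain ⟨a₀, ha₀⟩ := hA
    obtain ⟨b₀, hb₀⟩ := hB
    exact Finset.card_pos.mpr ⟨_, Finset.mem_image₂_of_mem ha₀ hb₀⟩
  have hnR : (1:ℝ) ≤ (n:ℝ) := by exact_mod_cast hn1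
  have hmR : (1:ℝ) ≤ (m:ℝ) := by exact_mod_cast hm1
  have hKR : (1:ℝ) ≤ (K:ℝ) := by exact_mod_cast hK1
  have hn23pos : (0:ℝ) < (n:ℝ)^((2:ℝ)/3) := Real.rpow_pos_of_pos (by linarith) _
  have hm23pos : (0:ℝ) < (m:ℝ)^((2:ℝ)/3) := Real.rpow_pos_of_pos (by linarith) _
  have hn23le : (n:ℝ)^((2:ℝ)/3) ≤ (n:ℝ) := by
    nth_rewrite 2 [← Real.rpow_one (n:ℝ)]
    exact Real.rpow_le_rpow_of_exponent_le hnR (by norm_num)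
  have hm23le : (m:ℝ)^((2:ℝ)/3) ≤ (m:ℝ) := by
    nth_rewrite 2 [← Real.rpow_one (m:ℝ)]
    exact Real.rpow_le_rpow_of_exponent_le hmR (by norm_num)
  rw [ge_iff_le]
  by_cases hA3 : n ≤ 3
  · -- trivial case via B
    have htriv : m ≤ 2 * K := trivial_B A B hA hA0
    have htrivR : (m:ℝ) ≤ 2 * (K:ℝ) := by exact_mod_cast htriv
    have hn3 : (n:ℝ) ≤ 3 := by exact_mod_cast hA3
    have hprod : (n:ℝ)^((2:ℝ)/3) * (m:ℝ)^((2:ℝ)/3) ≤ 3 * (m:ℝ) :=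
      mul_le_mul (le_trans hn23le hn3) hm23le (le_of_lt hm23pos) (by norm_num)
    have hstep : 1/1000 * ((n:ℝ)^((2:ℝ)/3) * (m:ℝ)^((2:ℝ)/3)) ≤ 1/1000 * (3*(m:ℝ)) :=
      mul_le_mul_of_nonneg_left hprod (by norm_num)
    have h6 : (3:ℝ)*(m:ℝ) ≤ 6*(K:ℝ) := by linarith
    calc 1/1000 * (n:ℝ)^((2:ℝ)/3) * (m:ℝ)^((2:ℝ)/3)
        = 1/1000 * ((n:ℝ)^((2:ℝ)/3) * (m:ℝ)^((2:ℝ)/3)) := by ring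
      _ ≤ 1/1000 * (3*(m:ℝ)) := hstep
      _ ≤ 1/1000 * (6*(K:ℝ)) := by linarith
      _ ≤ (K:ℝ) := by linarith
  by_cases hB3 : m ≤ 3
  · have htriv : n ≤ 2 * K := trivial_A A B hB hB0
    have htrivR : (n:ℝ) ≤ 2 * (K:ℝ) := by exact_mod_cast htriv
    have hm3 : (m:ℝ) ≤ 3 := by exact_mod_cast hB3
    have hprod : (n:ℝ)^((2:ℝ)/3) * (m:ℝ)^((2:ℝ)/3) ≤ (n:ℝ) * 3 :=
      mul_le_mul hn23le (le_trans hm23le hm3) (le_of_lt hm23pos) (by linarith)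
    have hstep : 1/1000 * ((n:ℝ)^((2:ℝ)/3) * (m:ℝ)^((2:ℝ)/3)) ≤ 1/1000 * ((n:ℝ)*3) :=
      mul_le_mul_of_nonneg_left hprod (by norm_num)
    have h6 : (n:ℝ)*3 ≤ 6*(K:ℝ) := by linarith
    calc 1/1000 * (n:ℝ)^((2:ℝ)/3) * (m:ℝ)^((2:ℝ)/3)
        = 1/1000 * ((n:ℝ)^((2:ℝ)/3) * (m:ℝ)^((2:ℝ)/3)) := by ring
      _ ≤ 1/1000 * ((n:ℝ)*3) := hstep
      _ ≤ 1/1000 * (6*(K:ℝ)) := by linarith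
      _ ≤ (K:ℝ) := by linarith
  -- main case
  push_neg at hA3 hB3
  have hmain := main_nat A B hA hB hA0 hB0
  rw [← hF, ← hn, ← hm, ← hK] at hmain
  have hcast : ((n:ℝ) - 2)^2 * ((m:ℝ) - 2)^2 ≤ 147456 * (K:ℝ)^3 := by
    have h1 : ((n - 2 : ℕ) : ℝ) = (n:ℝ) - 2 := by
      rw [Nat.cast_sub (by omega)]; norm_num
    have h2 : ((m - 2 : ℕ) : ℝ) = (m:ℝ) - 2 := by
      rw [Nat.cast_sub (by omega)]; norm_num
    have h3 : (((n - 2 : ℕ):ℝ))^2 * (((m - 2:ℕ)):ℝ)^2 ≤ 147456 * (K:ℝ)^3 := by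
      exact_mod_cast hmain
    rw [h1, h2] at h3
    exact h3
  have hn4 : (4:ℝ) ≤ (n:ℝ) := by exact_mod_cast hA3
  have hm4 : (4:ℝ) ≤ (m:ℝ) := by exact_mod_cast hB3
  have hsq : (n:ℝ)^2 * (m:ℝ)^2 ≤ 2359296 * (K:ℝ)^3 := by
    have e1 : (n:ℝ)^2 ≤ 4 * ((n:ℝ)-2)^2 := by nlinarith
    have e2 : (m:ℝ)^2 ≤ 4 * ((m:ℝ)-2)^2 := by nlinarith
    nlinarith [sq_nonneg ((n:ℝ)-2), sq_nonneg ((m:ℝ)-2), hcast]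
  -- conclude via cube comparison
  have hcube_n : ((n:ℝ)^((2:ℝ)/3))^(3:ℕ) = (n:ℝ)^(2:ℕ) := by
    rw [← Real.rpow_natCast ((n:ℝ)^((2:ℝ)/3)) 3, ← Real.rpow_mul (Nat.cast_nonneg n),
      ← Real.rpow_natCast (n:ℝ) 2]
    norm_num
  have hcube_m : ((m:ℝ)^((2:ℝ)/3))^(3:ℕ) = (m:ℝ)^(2:ℕ) := by
    rw [← Real.rpow_natCast ((m:ℝ)^((2:ℝ)/3)) 3, ← Real.rpow_mul (Nat.cast_nonneg m),
      ← Real.rpow_natCast (m:ℝ) 2]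
    norm_num
  apply le_of_pow_le_pow_left₀ (n := 3) (by norm_num) (by linarith)
  calc (1/1000 * (n:ℝ)^((2:ℝ)/3) * (m:ℝ)^((2:ℝ)/3))^3
      = (1/1000)^3 * (((n:ℝ)^((2:ℝ)/3))^(3:ℕ) * ((m:ℝ)^((2:ℝ)/3))^(3:ℕ)) := by ring
    _ = (1/1000)^3 * ((n:ℝ)^2 * (m:ℝ)^2) := by rw [hcube_n, hcube_m]
    _ ≤ (1/1000)^3 * (2359296 * (K:ℝ)^3) := by
        apply mul_le_mul_of_nonneg_left hsq (by norm_num)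
    _ ≤ (K:ℝ)^3 := by nlinarith [pow_pos (lt_of_lt_of_le zero_lt_one hKR) 3]
end

section
/- Let a, b, c, d be real numbers with (a, b) ≠ (c, d), a³ ≠ b³, and c³ ≠ d³. Then the set of pairs (y, y') of nonzero real numbers satisfying simultaneously a·y² + a²·y = b·y'² + b²·y' and c·y² + c²·y = d·y'² + d²·y' has at most 3 elements. -/
open Polynomial

/-- Covering lemma: if `S` is covered by the image of a set of ncard ≤ 3, done. -/
lemma cover3 {S : Set (ℝ × ℝ)} {f : ℝ → ℝ × ℝ} {T : Set ℝ}
    (hT : T.Finite) (hc : T.ncard ≤ 3) (hS : S ⊆ f '' T) :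
    S.Finite ∧ S.ncard ≤ 3 := by
  refine ⟨(hT.image f).subset hS, ?_⟩
  calc S.ncard ≤ (f '' T).ncard := Set.ncard_le_ncard hS (hT.image f)
    _ ≤ T.ncard := Set.ncard_image_le hT
    _ ≤ 3 := hc

/-- A nonzero real cubic has at most 3 roots. -/
lemma poly3 (α β γ δ : ℝ) (h : ¬ (α = 0 ∧ β = 0 ∧ γ = 0 ∧ δ = 0)) :
    {x : ℝ | α*x^3 + β*x^2 + γ*x + δ = 0}.Finite ∧
    Set.ncard {x : ℝ | α*x^3 + β*x^2 + γ*x + δ = 0} ≤ 3 := by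
  set p : ℝ[X] := C α * X^3 + C β * X^2 + C γ * X + C δ with hp
  have hp0 : p ≠ 0 := by
    intro h0
    apply h
    refine ⟨?_, ?_, ?_, ?_⟩
    · have := congrArg (fun q => Polynomial.coeff q 3) h0
      simpa [hp, coeff_add, coeff_C_mul, coeff_X_pow, coeff_C] using this
    · have := congrArg (fun q => Polynomial.coeff q 2) h0
      simpa [hp, coeff_add, coeff_C_mul, coeff_X_pow, coeff_C] using this
    · have := congrArg (fun q => Polynomial.coeff q 1) h0
      simpa [hp, coeff_add, coeff_C_mul, coeff_X_pow, coeff_C] using this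
    · have := congrArg (fun q => Polynomial.coeff q 0) h0
      simpa [hp, coeff_add, coeff_C_mul, coeff_X_pow, coeff_C] using this
  have hdeg : p.natDegree ≤ 3 := by
    rw [hp]; compute_degree
  have hset : {x : ℝ | α*x^3 + β*x^2 + γ*x + δ = 0} = ↑p.roots.toFinset := by
    ext x
    rw [Finset.mem_coe, Multiset.mem_toFinset, mem_roots hp0]
    simp [hp, IsRoot]
  rw [hset]
  refine ⟨(p.roots.toFinset : Finset ℝ).finite_toSet, ?_⟩
  rw [Set.ncard_coe_finset]
  calc p.roots.toFinset.card ≤ Multiset.card p.roots := p.roots.toFinset_card_le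
    _ ≤ p.natDegree := p.card_roots'
    _ ≤ 3 := hdeg

lemma forced (b t : ℝ) (hb : b ≠ 0) (ht : t ≠ 0) (h : b*t^2 + b^2*t = 0) : t = -b := by
  have h2 : b*t*(t+b) = 0 := by linear_combination h
  rcases mul_eq_zero.mp h2 with h3 | h3
  · rcases mul_eq_zero.mp h3 with h4 | h4
    · exact absurd h4 hb
    · exact absurd h4 ht
  · linarith

/-- Two distinct curves `γ_{a,b}` and `γ_{c,d}` with `a³ ≠ b³` and `c³ ≠ d³` meet in at
most three points with both coordinates nonzero. -/
theorem stmt_19 (a b c d : ℝ) (hne : (a, b) ≠ (c, d)) (hab : a ^ 3 ≠ b ^ 3)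
    (hcd : c ^ 3 ≠ d ^ 3) :
    {yy : ℝ × ℝ | yy.1 ≠ 0 ∧ yy.2 ≠ 0 ∧
        a * yy.1 ^ 2 + a ^ 2 * yy.1 = b * yy.2 ^ 2 + b ^ 2 * yy.2 ∧
        c * yy.1 ^ 2 + c ^ 2 * yy.1 = d * yy.2 ^ 2 + d ^ 2 * yy.2}.Finite ∧
    Set.ncard {yy : ℝ × ℝ | yy.1 ≠ 0 ∧ yy.2 ≠ 0 ∧
        a * yy.1 ^ 2 + a ^ 2 * yy.1 = b * yy.2 ^ 2 + b ^ 2 * yy.2 ∧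
        c * yy.1 ^ 2 + c ^ 2 * yy.1 = d * yy.2 ^ 2 + d ^ 2 * yy.2} ≤ 3 := by
  set S := {yy : ℝ × ℝ | yy.1 ≠ 0 ∧ yy.2 ≠ 0 ∧
        a * yy.1 ^ 2 + a ^ 2 * yy.1 = b * yy.2 ^ 2 + b ^ 2 * yy.2 ∧
        c * yy.1 ^ 2 + c ^ 2 * yy.1 = d * yy.2 ^ 2 + d ^ 2 * yy.2} with hSdef
  by_cases ha : a = 0
  · subst ha
    have hb : b ≠ 0 := by
      intro h; exact hab (by rw [h])
    by_cases hc : c = 0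
    · subst hc
      have hd : d ≠ 0 := by
        intro h; exact hcd (by rw [h])
      have hSe : S = ∅ := by
        ext ⟨y, t⟩
        simp only [hSdef, Set.mem_setOf_eq, Set.mem_empty_iff_false, iff_false, not_and]
        intro hy ht h1 h2
        have e1 : t = -b := forced b t hb ht (by linear_combination -h1)
        have e2 : t = -d := forced d t hd ht (by linear_combination -h2)
        exact hne (by rw [Prod.mk.injEq]; exact ⟨rfl, by linarith⟩)
      rw [hSe]
      exact ⟨Set.finite_empty, by simp⟩
    · -- a = 0, c ≠ 0 : t = -b, quadratic in y
      obtain ⟨hT, hCard⟩ := poly3 0 c (c^2) (-(d*b^2 - d^2*b)) (by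
        rintro ⟨-, h, -, -⟩; exact hc h)
      refine cover3 hT hCard (f := fun s => (s, -b)) ?_
      rintro ⟨y, t⟩ ⟨hy, ht, h1, h2⟩
      simp only at h1 h2 hy ht
      have e1 : t = -b := forced b t hb ht (by linear_combination -h1)
      refine ⟨y, ?_, by rw [← e1]⟩
      rw [e1] at h2
      show 0*y^3 + c*y^2 + c^2*y + -(d*b^2 - d^2*b) = 0
      linear_combination h2
  · by_cases hc : c = 0
    · subst hc
      have hd : d ≠ 0 := by
        intro h; exact hcd (by rw [h])
      obtain ⟨hT, hCard⟩ := poly3 0 a (a^2) (-(b*d^2 - b^2*d)) (by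
        rintro ⟨-, h, -, -⟩; exact ha h)
      refine cover3 hT hCard (f := fun s => (s, -d)) ?_
      rintro ⟨y, t⟩ ⟨hy, ht, h1, h2⟩
      simp only at h1 h2 hy ht
      have e1 : t = -d := forced d t hd ht (by linear_combination -h2)
      refine ⟨y, ?_, by rw [← e1]⟩
      rw [e1] at h1
      show 0*y^3 + a*y^2 + a^2*y + -(b*d^2 - b^2*d) = 0
      linear_combination h1
    · by_cases hac : a = c
      · -- a = c ≠ 0, so b ≠ d; t = -(b+d)
        have hbd : b ≠ d := by
          intro h; exact hne (by rw [Prod.mk.injEq]; exact ⟨hac, h⟩)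
        obtain ⟨hT, hCard⟩ := poly3 0 a (a^2) (-(b*(b+d)^2 - b^2*(b+d))) (by
          rintro ⟨-, h, -, -⟩; exact ha h)
        refine cover3 hT hCard (f := fun s => (s, -(b+d))) ?_
        rintro ⟨y, t⟩ ⟨hy, ht, h1, h2⟩
        simp only at h1 h2 hy ht
        have key : t * ((b-d)*t + (b^2-d^2)) = 0 := by
          rw [← hac] at h2
          linear_combination h2 - h1
        have e1 : t = -(b+d) := by
          rcases mul_eq_zero.mp key with h3 | h3
          · exact absurd h3 ht
          · have hbd' : b - d ≠ 0 := sub_ne_zero.mpr hbd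
            have : (b-d) * (t + (b+d)) = 0 := by linear_combination h3
            rcases mul_eq_zero.mp this with h4 | h4
            · exact absurd h4 hbd'
            · linarith
        refine ⟨y, ?_, by rw [← e1]⟩
        rw [e1] at h1
        show 0*y^3 + a*y^2 + a^2*y + -(b*(b+d)^2 - b^2*(b+d)) = 0
        linear_combination h1
      · -- main case: a ≠ 0, c ≠ 0, a ≠ c
        set A := c*b - a*d with hA
        set B := c*b^2 - a*d^2 with hB
        set e := a*c*(a-c) with he
        set Cc := c^2*b - a^2*d with hCc
        set Dd := c^2*b^2 - a^2*d^2 with hDd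
        have he0 : e ≠ 0 :=
          mul_ne_zero (mul_ne_zero ha hc) (sub_ne_zero.mpr hac)
        -- for any member, e*y = A t² + B t and e*y² = -(Cc t² + Dd t)
        have hmem : ∀ y t : ℝ, (a * y ^ 2 + a ^ 2 * y = b * t ^ 2 + b ^ 2 * t) →
            (c * y ^ 2 + c ^ 2 * y = d * t ^ 2 + d ^ 2 * t) →
            e*y = A*t^2 + B*t ∧ e*y^2 = -(Cc*t^2 + Dd*t) := by
          intro y t h1 h2
          constructor
          · rw [he, hA, hB]; linear_combination c*h1 - a*h2
          · rw [he, hCc, hDd]; linear_combination a^2*h2 - c^2*h1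
        by_cases hAB : A = 0 ∧ B = 0
        · -- S is empty
          have hSe : S = ∅ := by
            ext ⟨y, t⟩
            simp only [hSdef, Set.mem_setOf_eq, Set.mem_empty_iff_false, iff_false, not_and]
            intro hy ht h1 h2
            obtain ⟨h3, -⟩ := hmem y t h1 h2
            rw [hAB.1, hAB.2] at h3
            have : y = 0 := by
              have := mul_eq_zero.mp (show e * y = 0 by linarith [h3])
              tauto
            exact hy this
          rw [hSe]
          exact ⟨Set.finite_empty, by simp⟩
        · have hco : ¬ (A^2 = 0 ∧ 2*A*B = 0 ∧ B^2 + e*Cc = 0 ∧ e*Dd = 0) := by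
            rintro ⟨h1', -, h3', -⟩
            have hA0 : A = 0 := by
              exact pow_eq_zero_iff two_ne_zero |>.mp h1'
            have hB0 : B ≠ 0 := fun h => hAB ⟨hA0, h⟩
            have hbne : b ≠ 0 := by
              intro hb0
              apply hB0
              have hd0 : d = 0 := by
                have : a * d = 0 := by rw [hA, hb0] at hA0; linarith
                exact (mul_eq_zero.mp this).resolve_left ha
              rw [hB, hb0, hd0]; ring
            have key : c^2*b*(a-c)^2*(b^3-a^3) = 0 := by
              rw [hA] at hA0
              rw [hB, he, hCc] at h3'
              linear_combination a^2*h3' - (-b^3*c^3 - a*b^2*c^2*d + 2*a*b^3*c^2 - a^2*b*c*d^2 + 2*a^2*b^2*c*d - a^3*d^3 - a^4*c^2 + a^5*c) * hA0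
            have hnz : c^2*b*(a-c)^2*(b^3-a^3) ≠ 0 :=
              mul_ne_zero (mul_ne_zero (mul_ne_zero (pow_ne_zero 2 hc) hbne)
                (pow_ne_zero 2 (sub_ne_zero.mpr hac))) (sub_ne_zero.mpr (Ne.symm hab))
            exact hnz key
          obtain ⟨hT, hCard⟩ := poly3 (A^2) (2*A*B) (B^2 + e*Cc) (e*Dd) hco
          refine cover3 hT hCard (f := fun t => ((A*t^2 + B*t)/e, t)) ?_
          rintro ⟨y, t⟩ ⟨hy, ht, h1, h2⟩
          simp only at h1 h2 hy ht
          obtain ⟨h3, h4⟩ := hmem y t h1 h2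
          have hq : t * (A^2*t^3 + (2*A*B)*t^2 + (B^2 + e*Cc)*t + e*Dd) = 0 := by
            linear_combination (-(e*y + A*t^2 + B*t))*h3 + e*h4
          have hroot : A^2*t^3 + (2*A*B)*t^2 + (B^2 + e*Cc)*t + e*Dd = 0 :=
            (mul_eq_zero.mp hq).resolve_left ht
          refine ⟨t, hroot, ?_⟩
          have hyval : (A*t^2 + B*t)/e = y := by
            field_simp
            linarith [h3]
          simp only [hyval]
end
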